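/- Let K be a convex body in ℝ^n with 0 in its interior, and let f = e^{−h_K}, where h_K is the support function of K. Then Δf = e^{−h_{K ∩ (−K)}}, i.e. the difference function of f equals the exponential of minus the support function of K ∩ (−K). -/

import Mathlib

open MeasureTheory Set
open scoped ENNReal

/-- The difference function of `f`:
`Δf(z) = sup { √(f(x)·f(−y)) : (x+y)/2 = z }`, with values in `[0,∞]`. -/
noncomputable def diffFn {n : ℕ} (f : (Fin n → ℝ) → ℝ) (z : Fin n → ℝ) : ℝ≥0∞ :=
  sSup {r : ℝ≥0∞ | ∃ x y : Fin n → ℝ, (1 / 2 : ℝ) • (x + y) = z ∧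
    r = ENNReal.ofReal (Real.sqrt (f x * f (-y)))}

/-- The support function of a set `K ⊆ ℝⁿ`: `h_K(x) = sup_{y ∈ K} ⟨x, y⟩`. -/
noncomputable def suppFn {n : ℕ} (K : Set (Fin n → ℝ)) (x : Fin n → ℝ) : ℝ :=
  sSup ((fun y => ∑ i, x i * y i) '' K)

variable {n : ℕ}

lemma dot_continuous (x : Fin n → ℝ) : Continuous (fun y : Fin n → ℝ => ∑ i, x i * y i) :=
  continuous_finset_sum _ fun i _ => (continuous_const.mul (continuous_apply i))

lemma suppFn_bdd {K : Set (Fin n → ℝ)} (hK : IsCompact K) (x : Fin n → ℝ) :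
    BddAbove ((fun y => ∑ i, x i * y i) '' K) :=
  (hK.image (dot_continuous x)).bddAbove

lemma le_suppFn {K : Set (Fin n → ℝ)} (hK : IsCompact K) {b : Fin n → ℝ} (hb : b ∈ K)
    (x : Fin n → ℝ) : (∑ i, x i * b i) ≤ suppFn K x :=
  le_csSup (suppFn_bdd hK x) ⟨b, hb, rfl⟩

lemma suppFn_le {K : Set (Fin n → ℝ)} (hne : K.Nonempty) {x : Fin n → ℝ} {B : ℝ}
    (h : ∀ b ∈ K, (∑ i, x i * b i) ≤ B) : suppFn K x ≤ B := by
  apply csSup_le (hne.image _)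
  rintro r ⟨b, hb, rfl⟩
  exact h b hb

lemma exists_decomp (K : Set (Fin n → ℝ)) (hKcomp : IsCompact K)
    (hKconv : Convex ℝ K) (h0K : (0 : Fin n → ℝ) ∈ K) (z : Fin n → ℝ) {ε : ℝ} (hε : 0 < ε) :
    ∃ u : Fin n → ℝ, ∀ a ∈ K, ∀ b ∈ K,
      (∑ i, u i * a i) + (∑ i, (u i - 2 * z i) * b i)
        ≤ 2 * suppFn (K ∩ ((fun y => -y) '' K)) z + ε := by
  classical
  set M : Set (Fin n → ℝ) := K ∩ ((fun y => -y) '' K) with hM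
  have hMcomp : IsCompact M := hKcomp.inter_right (hKcomp.image continuous_neg).isClosed
  have hM0 : (0 : Fin n → ℝ) ∈ M := ⟨h0K, ⟨0, h0K, by simp⟩⟩
  set α : ℝ := suppFn M z with hα
  have hα0 : 0 ≤ α := by
    have := le_suppFn hMcomp hM0 z
    simpa using this
  set τ : ℝ := α + ε / 2 with hτdef
  have hτ : 0 < τ := by positivity
  -- the linear map T (a,b) = (a+b, ⟨z,b⟩)
  set T : ((Fin n → ℝ) × (Fin n → ℝ)) →ₗ[ℝ] ((Fin n → ℝ) × ℝ) :=
    { toFun := fun q => (q.1 + q.2, ∑ i, z i * q.2 i)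
      map_add' := by
        intro q r
        rw [Prod.mk.injEq]
        constructor
        · show q.1 + r.1 + (q.2 + r.2) = q.1 + q.2 + (r.1 + r.2)
          abel
        · show (∑ i, z i * (q.2 + r.2) i) = (∑ i, z i * q.2 i) + (∑ i, z i * r.2 i)
          simp [Pi.add_apply, mul_add, Finset.sum_add_distrib]
      map_smul' := by
        intro c q
        rw [RingHom.id_apply, Prod.smul_def, Prod.mk.injEq]
        constructor
        · show (c • q).1 + (c • q).2 = c • (q.1 + q.2)
          simp [smul_add]
        · show (∑ i, z i * (c • q.2) i) = c • (∑ i, z i * q.2 i)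
          simp only [Pi.smul_apply, smul_eq_mul, Finset.mul_sum]
          exact Finset.sum_congr rfl fun i _ => by ring } with hT
  set S' : Set ((Fin n → ℝ) × ℝ) := T '' (K ×ˢ K) with hS'
  have hS'comp : IsCompact S' := (hKcomp.prod hKcomp).image T.continuous_of_finiteDimensional
  have hS'conv : Convex ℝ S' := (hKconv.prod hKconv).linear_image T
  set C : Set ((Fin n → ℝ) × ℝ) := {(0 : Fin n → ℝ)} ×ˢ Iic (-τ) with hC
  have hCconv : Convex ℝ C := (convex_singleton _).prod (convex_Iic _)
  have hCclosed : IsClosed C := isClosed_singleton.prod isClosed_Iic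
  have hdisj : Disjoint S' C := by
    rw [Set.disjoint_left]
    rintro q ⟨⟨a, b⟩, ⟨haK, hbK⟩, rfl⟩ ⟨hq1, hq2⟩
    simp only [hT, LinearMap.coe_mk, AddHom.coe_mk, mem_singleton_iff, Set.mem_Iic] at hq1 hq2
    -- hq1 : a + b = 0, hq2 : ∑ z i * b i ≤ -τ
    have hab : a = -b := eq_neg_of_add_eq_zero_left hq1
    have hbM : -b ∈ M := ⟨by rwa [hab] at haK, ⟨b, hbK, rfl⟩⟩
    have h1 : (∑ i, z i * (-b) i) ≤ α := le_suppFn hMcomp hbM z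
    have h2 : (∑ i, z i * (-b) i) = -(∑ i, z i * b i) := by
      rw [← Finset.sum_neg_distrib]
      exact Finset.sum_congr rfl fun i _ => by simp
    rw [h2] at h1
    rw [hτdef] at hq2
    linarith
  obtain ⟨f, r₁, r₂, hS'f, hr, hCf⟩ :=
    geometric_hahn_banach_compact_closed hS'conv hS'comp hCconv hCclosed hdisj
  -- decompose f
  set c : ℝ := f (0, 1) with hc
  set w : Fin n → ℝ := fun i => f (Pi.single i 1, 0) with hw
  have hrep : ∀ p : Fin n → ℝ, f (p, (0 : ℝ)) = ∑ i, p i * w i := by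
    intro p
    have hsingle : ∀ i, (p i) • (Pi.single i 1 : Fin n → ℝ) = Pi.single i (p i) := by
      intro i
      ext j
      by_cases h : j = i <;> simp [Pi.single_apply, h]
    have hp : ((p, (0 : ℝ)) : (Fin n → ℝ) × ℝ)
        = ∑ i, (p i) • ((Pi.single i 1 : Fin n → ℝ), (0 : ℝ)) := by
      simp_rw [Prod.smul_mk, smul_zero, ← prod_mk_sum, hsingle, Finset.univ_sum_single,
        Finset.sum_const_zero]
    rw [hp, map_sum]
    refine Finset.sum_congr rfl fun i _ => ?_
    rw [_root_.map_smul, smul_eq_mul, hw]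
  have hfps : ∀ (p : Fin n → ℝ) (s : ℝ), f (p, s) = (∑ i, p i * w i) + s * c := by
    intro p s
    have : ((p, s) : (Fin n → ℝ) × ℝ) = (p, 0) + s • ((0 : Fin n → ℝ), (1 : ℝ)) := by
      refine Prod.ext (by simp) (by simp)
    rw [this, map_add, _root_.map_smul, smul_eq_mul, hrep, hc]
  -- r₁ > 0
  have h00 : ((0 : Fin n → ℝ), (0 : ℝ)) ∈ S' := ⟨(0, 0), ⟨h0K, h0K⟩, by simp [hT]⟩
  have hr₁ : 0 < r₁ := by
    have := hS'f _ h00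
    rwa [show ((0 : Fin n → ℝ), (0 : ℝ)) = 0 from rfl, map_zero] at this
  -- c < 0
  have hcτ : r₂ < -τ * c := by
    have hCmem : ((0 : Fin n → ℝ), -τ) ∈ C := ⟨rfl, Set.mem_Iic.2 le_rfl⟩
    have h := hCf _ hCmem
    have heq : f ((0 : Fin n → ℝ), -τ) = -τ * c := by rw [hfps]; simp
    rw [heq] at h
    exact h
  have hcneg : c < 0 := by nlinarith [hr₁, hr, hcτ, hτ]
  set d : ℝ := -c with hd
  have hdpos : 0 < d := by rw [hd]; linarith
  refine ⟨(2 / d) • w, ?_⟩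
  intro a ha b hb
  have hmem : T (a, b) ∈ S' := ⟨(a, b), ⟨ha, hb⟩, rfl⟩
  have hineq := hS'f _ hmem
  have hTval : f (T (a, b)) = (∑ i, (a + b) i * w i) + (∑ i, z i * b i) * c := by
    simp only [hT, LinearMap.coe_mk, AddHom.coe_mk]
    rw [hfps]
  rw [hTval] at hineq
  -- so (∑ (a+b) i * w i) - d * (∑ z i b i) < r₁ < r₂ < -τ c = τ d
  have key : (∑ i, (a + b) i * w i) - d * (∑ i, z i * b i) < τ * d := by
    have h1 : (∑ i, z i * b i) * c = -(d * (∑ i, z i * b i)) := by rw [hd]; ring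
    have h2 : -τ * c = τ * d := by rw [hd]; ring
    linarith [hineq, hr, hcτ]
  have hgoal : (2 / d) * (∑ i, (a + b) i * w i) - 2 * (∑ i, z i * b i) < 2 * τ := by
    have h2d : 0 < 2 / d := by positivity
    have := mul_lt_mul_of_pos_left key h2d
    calc (2 / d) * (∑ i, (a + b) i * w i) - 2 * (∑ i, z i * b i)
        = (2 / d) * ((∑ i, (a + b) i * w i) - d * (∑ i, z i * b i)) := by
          field_simp
      _ < (2 / d) * (τ * d) := this
      _ = 2 * τ := by field_simp
  have hsum : (∑ i, ((2 / d) • w) i * a i) + (∑ i, (((2 / d) • w) i - 2 * z i) * b i)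
      = (2 / d) * (∑ i, (a + b) i * w i) - 2 * (∑ i, z i * b i) := by
    simp only [Pi.smul_apply, smul_eq_mul, Pi.add_apply, Finset.mul_sum]
    rw [← Finset.sum_add_distrib, ← Finset.sum_sub_distrib]
    exact Finset.sum_congr rfl fun i _ => by ring
  rw [hsum]
  have : 2 * τ = 2 * α + ε := by rw [hτdef]; ring
  linarith [hgoal]

lemma sqrt_exp_mul (a b : ℝ) :
    Real.sqrt (Real.exp a * Real.exp b) = Real.exp ((a + b) / 2) := by
  have h : Real.exp a * Real.exp b = Real.exp ((a + b) / 2) * Real.exp ((a + b) / 2) := by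
    rw [← Real.exp_add, ← Real.exp_add]
    ring_nf
  rw [h, Real.sqrt_mul_self (Real.exp_pos _).le]

/-- For a convex body `K` in `ℝⁿ` with `0` in its interior and `f = e^{−h_K}`,
the difference function of `f` is `e^{−h_{K ∩ (−K)}}`. -/
theorem diffFn_exp_neg_suppFn {n : ℕ} (K : Set (Fin n → ℝ))
    (hKcomp : IsCompact K) (hKconv : Convex ℝ K) (h0 : 0 ∈ interior K) :
    ∀ z : Fin n → ℝ,
      diffFn (fun x => Real.exp (-(suppFn K x))) z =
        ENNReal.ofReal (Real.exp (-(suppFn (K ∩ ((fun y => -y) '' K)) z))) := by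
  intro z
  classical
  have h0K : (0 : Fin n → ℝ) ∈ K := interior_subset h0
  set M : Set (Fin n → ℝ) := K ∩ ((fun y => -y) '' K) with hM
  have hMcomp : IsCompact M := hKcomp.inter_right (hKcomp.image continuous_neg).isClosed
  have hM0 : (0 : Fin n → ℝ) ∈ M := ⟨h0K, ⟨0, h0K, by simp⟩⟩
  set α : ℝ := suppFn M z with hα
  simp only [diffFn]
  set S : Set ℝ≥0∞ := {r : ℝ≥0∞ | ∃ x y : Fin n → ℝ, (1 / 2 : ℝ) • (x + y) = z ∧
    r = ENNReal.ofReal (Real.sqrt (Real.exp (-(suppFn K x)) * Real.exp (-(suppFn K (-y)))))}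
    with hS
  -- upper bound
  have hub : sSup S ≤ ENNReal.ofReal (Real.exp (-α)) := by
    apply sSup_le
    rintro r ⟨x, y, hxy, rfl⟩
    have hz : ∀ w : Fin n → ℝ,
        (∑ i, z i * w i) = ((∑ i, x i * w i) + (∑ i, y i * w i)) / 2 := by
      intro w
      rw [← hxy, ← Finset.sum_add_distrib, Finset.sum_div]
      refine Finset.sum_congr rfl fun i _ => ?_
      simp only [Pi.smul_apply, Pi.add_apply, smul_eq_mul]
      ring
    have hαle : α ≤ (suppFn K x + suppFn K (-y)) / 2 := by
      apply suppFn_le ⟨0, hM0⟩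
      intro w hw
      obtain ⟨hwK, k, hkK, hk⟩ := hw
      have hwk : -w ∈ K := by
        have : -w = k := by rw [← hk]; simp
        rwa [this]
      have hxw : (∑ i, x i * w i) ≤ suppFn K x := le_suppFn hKcomp hwK x
      have hyw : (∑ i, y i * w i) ≤ suppFn K (-y) := by
        have heq : (∑ i, y i * w i) = (∑ i, (-y) i * (-w) i) := by
          refine Finset.sum_congr rfl fun i _ => ?_
          simp only [Pi.neg_apply]; ring
        rw [heq]
        exact le_suppFn hKcomp hwk (-y)
      rw [hz w]
      linarith
    rw [sqrt_exp_mul]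
    apply ENNReal.ofReal_le_ofReal
    apply Real.exp_le_exp.mpr
    have : (-(suppFn K x) + -(suppFn K (-y))) / 2 = -((suppFn K x + suppFn K (-y)) / 2) := by
      ring
    rw [this]
    linarith
  -- lower bound with ε
  have hlbε : ∀ ε : ℝ, 0 < ε → ENNReal.ofReal (Real.exp (-α - ε)) ≤ sSup S := by
    intro ε hε
    obtain ⟨u, hu⟩ := exists_decomp K hKcomp hKconv h0K z (show (0:ℝ) < 2 * ε by linarith)
    set y : Fin n → ℝ := (2 : ℝ) • z - u with hy
    have hxy : (1 / 2 : ℝ) • (u + y) = z := by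
      ext i
      simp only [hy, Pi.smul_apply, Pi.add_apply, Pi.sub_apply, smul_eq_mul]
      ring
    have hnegy : ∀ i, (-y) i = u i - 2 * z i := by
      intro i
      simp only [hy, Pi.neg_apply, Pi.sub_apply, Pi.smul_apply, smul_eq_mul]
      ring
    have hsum : suppFn K u + suppFn K (-y) ≤ 2 * α + 2 * ε := by
      have inner : ∀ a ∈ K, (∑ i, u i * a i) ≤ (2 * α + 2 * ε) - suppFn K (-y) := by
        intro a ha
        have h2 : suppFn K (-y) ≤ (2 * α + 2 * ε) - (∑ i, u i * a i) := by
          apply suppFn_le ⟨0, h0K⟩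
          intro b hb
          have h3 := hu a ha b hb
          have heq : (∑ i, (-y) i * b i) = ∑ i, (u i - 2 * z i) * b i := by
            refine Finset.sum_congr rfl fun i _ => ?_
            rw [hnegy i]
          rw [heq]
          rw [← hM, ← hα] at h3
          linarith
        linarith
      have h4 : suppFn K u ≤ (2 * α + 2 * ε) - suppFn K (-y) := suppFn_le ⟨0, h0K⟩ inner
      linarith
    have hle : ENNReal.ofReal (Real.exp (-α - ε)) ≤
        ENNReal.ofReal (Real.sqrt (Real.exp (-(suppFn K u)) * Real.exp (-(suppFn K (-y))))) := by
      rw [sqrt_exp_mul]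
      apply ENNReal.ofReal_le_ofReal
      apply Real.exp_le_exp.mpr
      have : (-(suppFn K u) + -(suppFn K (-y))) / 2
          = -((suppFn K u + suppFn K (-y)) / 2) := by ring
      rw [this]
      linarith
    exact hle.trans (le_sSup ⟨u, y, hxy, rfl⟩)
  -- pass to the limit
  have hfin : sSup S ≠ ⊤ := (lt_of_le_of_lt hub ENNReal.ofReal_lt_top).ne
  have ht : ∀ ε ∈ Set.Ioi (0:ℝ), Real.exp (-α - ε) ≤ (sSup S).toReal := by
    intro ε hε
    have h1 := hlbε ε hε
    have h2 := ENNReal.toReal_mono hfin h1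
    rwa [ENNReal.toReal_ofReal (Real.exp_pos _).le] at h2
  have hlim : Real.exp (-α) ≤ (sSup S).toReal := by
    have hcont : Continuous fun ε : ℝ => Real.exp (-α - ε) :=
      Real.continuous_exp.comp (continuous_const.sub continuous_id)
    have h0' : Filter.Tendsto (fun ε : ℝ => Real.exp (-α - ε)) (nhdsWithin 0 (Set.Ioi 0))
        (nhds (Real.exp (-α))) := by
      have := (hcont.tendsto 0).mono_left (nhdsWithin_le_nhds (s := Set.Ioi (0:ℝ)))
      simpa using this
    exact le_of_tendsto h0' (Filter.eventually_of_mem self_mem_nhdsWithin ht)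
  refine le_antisymm hub ?_
  calc ENNReal.ofReal (Real.exp (-α)) ≤ ENNReal.ofReal ((sSup S).toReal) :=
        ENNReal.ofReal_le_ofReal hlim
    _ = sSup S := ENNReal.ofReal_toReal hfin
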